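/- Let A₀ ⊆ A₁ ⊆ ℤ³ with A₀ generated by (1,3,0), (3,1,0) and A₁ generated by (1,0,−24), (0,1,8), (0,0,64). Let f, g : ℤ³ → ℤ be the first and second coordinate projections. There is no triple of group isomorphisms φᵢ : ker f ∩ Aᵢ → ker g ∩ Aᵢ (i = 0,1,2, with A₂ = ℤ³) such that φ₁ restricts to φ₀ and φ₂ restricts to φ₁. -/

import Mathlib

/-- First-coordinate projection `ℤ³ → ℤ`. -/
def f : ℤ × ℤ × ℤ →+ ℤ := AddMonoidHom.fst ℤ (ℤ × ℤ)

/-- Second-coordinate projection `ℤ³ → ℤ`. -/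
def g : ℤ × ℤ × ℤ →+ ℤ := (AddMonoidHom.fst ℤ ℤ).comp (AddMonoidHom.snd ℤ (ℤ × ℤ))

/-- The subgroup `A₀` of `ℤ³`. -/
def A0 : AddSubgroup (ℤ × ℤ × ℤ) := AddSubgroup.closure {(1, 3, 0), (3, 1, 0)}

/-- The subgroup `A₁` of `ℤ³`. -/
def A1 : AddSubgroup (ℤ × ℤ × ℤ) := AddSubgroup.closure {(1, 0, -24), (0, 1, 8), (0, 0, 64)}

/-- An overgroup of `A0` defined by congruence conditions. -/
def B0 : AddSubgroup (ℤ × ℤ × ℤ) where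
  carrier := {x | x.2.2 = 0 ∧ (8:ℤ) ∣ 3 * x.1 - x.2.1}
  zero_mem' := by constructor <;> simp
  add_mem' := by
    rintro ⟨a,b,c⟩ ⟨d,e,k⟩ ⟨h1,h2⟩ ⟨h3,h4⟩
    simp only [Prod.mk_add_mk, Set.mem_setOf_eq] at *
    omega
  neg_mem' := by
    rintro ⟨a,b,c⟩ ⟨h1,h2⟩
    simp only [Prod.neg_mk, Set.mem_setOf_eq] at *
    omega

/-- An overgroup of `A1` defined by a congruence condition. -/
def B1 : AddSubgroup (ℤ × ℤ × ℤ) where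
  carrier := {x | (64:ℤ) ∣ x.2.2 + 24 * x.1 - 8 * x.2.1}
  zero_mem' := by simp
  add_mem' := by
    rintro ⟨a,b,c⟩ ⟨d,e,k⟩ h1 h2
    simp only [Prod.mk_add_mk, Set.mem_setOf_eq] at *
    omega
  neg_mem' := by
    rintro ⟨a,b,c⟩ h1
    simp only [Prod.neg_mk, Set.mem_setOf_eq] at *
    omega

lemma A0_le_B0 : A0 ≤ B0 := by
  rw [A0, AddSubgroup.closure_le]
  rintro x (rfl | rfl) <;> exact ⟨by norm_num, by norm_num⟩

lemma A1_le_B1 : A1 ≤ B1 := by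
  rw [A1, AddSubgroup.closure_le]
  rintro x (rfl | rfl | rfl) <;> · show (64:ℤ) ∣ _; norm_num

lemma u0_mem_A0 : ((0:ℤ), (8:ℤ), (0:ℤ)) ∈ A0 := by
  have h1 : ((1:ℤ), (3:ℤ), (0:ℤ)) ∈ A0 := AddSubgroup.subset_closure (by simp)
  have h2 : ((3:ℤ), (1:ℤ), (0:ℤ)) ∈ A0 := AddSubgroup.subset_closure (by simp)
  have h3 := A0.sub_mem (A0.zsmul_mem h1 3) h2
  have he : (3:ℤ) • ((1:ℤ), (3:ℤ), (0:ℤ)) - ((3:ℤ), (1:ℤ), (0:ℤ))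
      = ((0:ℤ), (8:ℤ), (0:ℤ)) := by
    simp [Prod.ext_iff]
  rwa [he] at h3

lemma u0_mem_A1 : ((0:ℤ), (8:ℤ), (0:ℤ)) ∈ A1 := by
  have h1 : ((0:ℤ), (1:ℤ), (8:ℤ)) ∈ A1 := AddSubgroup.subset_closure (by simp)
  have h2 : ((0:ℤ), (0:ℤ), (64:ℤ)) ∈ A1 := AddSubgroup.subset_closure (by simp)
  have h3 := A1.sub_mem (A1.zsmul_mem h1 8) h2
  have he : (8:ℤ) • ((0:ℤ), (1:ℤ), (8:ℤ)) - ((0:ℤ), (0:ℤ), (64:ℤ))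
      = ((0:ℤ), (8:ℤ), (0:ℤ)) := by
    simp [Prod.ext_iff]
  rwa [he] at h3

lemma u_mem_A1 : ((0:ℤ), (1:ℤ), (8:ℤ)) ∈ A1 := AddSubgroup.subset_closure (by simp)

set_option maxHeartbeats 1000000
set_option synthInstance.maxHeartbeats 1000000

theorem stmt8 :
    ¬ ∃ (φ0 : (f.ker ⊓ A0 : AddSubgroup (ℤ × ℤ × ℤ)) ≃+ (g.ker ⊓ A0 : AddSubgroup (ℤ × ℤ × ℤ)))
      (φ1 : (f.ker ⊓ A1 : AddSubgroup (ℤ × ℤ × ℤ)) ≃+ (g.ker ⊓ A1 : AddSubgroup (ℤ × ℤ × ℤ)))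
      (φ2 : f.ker ≃+ g.ker),
      (∀ (x : ℤ × ℤ × ℤ) (h0 : x ∈ f.ker ⊓ A0) (h1 : x ∈ f.ker ⊓ A1),
        ((φ1 ⟨x, h1⟩ : ℤ × ℤ × ℤ)) = ((φ0 ⟨x, h0⟩ : ℤ × ℤ × ℤ))) ∧
      (∀ (x : ℤ × ℤ × ℤ) (h1 : x ∈ f.ker ⊓ A1) (h2 : x ∈ f.ker),
        ((φ2 ⟨x, h2⟩ : ℤ × ℤ × ℤ)) = ((φ1 ⟨x, h1⟩ : ℤ × ℤ × ℤ))) := by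
  rintro ⟨φ0, φ1, φ2, h01, h12⟩
  have hm0 : ((0:ℤ), (8:ℤ), (0:ℤ)) ∈ f.ker ⊓ A0 := ⟨rfl, u0_mem_A0⟩
  have hm1 : ((0:ℤ), (8:ℤ), (0:ℤ)) ∈ f.ker ⊓ A1 := ⟨rfl, u0_mem_A1⟩
  have hmu : ((0:ℤ), (1:ℤ), (8:ℤ)) ∈ f.ker ⊓ A1 := ⟨rfl, u_mem_A1⟩
  have hk0 : ((0:ℤ), (8:ℤ), (0:ℤ)) ∈ f.ker := rfl
  have hku : ((0:ℤ), (1:ℤ), (8:ℤ)) ∈ f.ker := rfl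
  have hke1 : ((0:ℤ), (1:ℤ), (0:ℤ)) ∈ f.ker := rfl
  have hke3 : ((0:ℤ), (0:ℤ), (1:ℤ)) ∈ f.ker := rfl
  -- φ2 (0,8,0) lands in g.ker ⊓ A0
  have hval0 : (φ2 ⟨(0, 8, 0), hk0⟩ : ℤ × ℤ × ℤ) ∈ g.ker ⊓ A0 := by
    rw [h12 (0, 8, 0) hm1 hk0, h01 (0, 8, 0) hm0 hm1]
    exact (φ0 ⟨(0, 8, 0), hm0⟩).2
  have hcoeB0 : (φ2 ⟨(0, 8, 0), hk0⟩ : ℤ × ℤ × ℤ) ∈ B0 := A0_le_B0 hval0.2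
  -- (0,8,0) = 8 • (0,1,0) inside ker f
  have hU08 : (⟨(0, 8, 0), hk0⟩ : f.ker) = (8:ℤ) • ⟨(0, 1, 0), hke1⟩ := by
    apply Subtype.ext
    rw [AddSubgroup.coe_zsmul]
    simp [Prod.ext_iff]
  -- components of φ2 e1
  obtain ⟨⟨s, y1, z1⟩, he1v⟩ : ∃ v : ℤ × ℤ × ℤ,
      (φ2 ⟨(0, 1, 0), hke1⟩ : ℤ × ℤ × ℤ) = v := ⟨_, rfl⟩
  have hy1 : y1 = 0 := by
    have := (φ2 ⟨(0, 1, 0), hke1⟩).2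
    rw [he1v] at this
    exact this
  have h8e1 : (φ2 ⟨(0, 8, 0), hk0⟩ : ℤ × ℤ × ℤ) = (8 * s, 8 * y1, 8 * z1) := by
    rw [hU08, map_zsmul, AddSubgroup.coe_zsmul, he1v]
    simp [Prod.ext_iff]
  have hz1 : z1 = 0 := by
    have h3 := hcoeB0.1
    rw [h8e1] at h3
    simp only at h3
    omega
  -- components of φ2 e3
  obtain ⟨⟨p, y3, q⟩, he3v⟩ : ∃ v : ℤ × ℤ × ℤ,
      (φ2 ⟨(0, 0, 1), hke3⟩ : ℤ × ℤ × ℤ) = v := ⟨_, rfl⟩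
  have hy3 : y3 = 0 := by
    have := (φ2 ⟨(0, 0, 1), hke3⟩).2
    rw [he3v] at this
    exact this
  -- surjectivity
  have hsq : ∀ w : g.ker, ∃ y z : ℤ,
      (w : ℤ × ℤ × ℤ).1 = y * s + z * p ∧ (w : ℤ × ℤ × ℤ).2.2 = y * z1 + z * q := by
    intro w
    obtain ⟨x, hx⟩ := φ2.surjective w
    obtain ⟨⟨x1, y, z⟩, hxv⟩ : ∃ v : ℤ × ℤ × ℤ, (x : ℤ × ℤ × ℤ) = v := ⟨_, rfl⟩
    have hx1 : x1 = 0 := by have := x.2; rw [hxv] at this; exact this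
    refine ⟨y, z, ?_⟩
    have hxe : x = y • (⟨(0, 1, 0), hke1⟩ : f.ker) + z • ⟨(0, 0, 1), hke3⟩ := by
      apply Subtype.ext
      rw [AddSubgroup.coe_add, AddSubgroup.coe_zsmul, AddSubgroup.coe_zsmul, hxv, hx1]
      simp [Prod.ext_iff]
    have hc := congrArg (fun t : g.ker => (t : ℤ × ℤ × ℤ)) (congrArg φ2 hxe)
    simp only [map_add, map_zsmul, AddSubgroup.coe_add, AddSubgroup.coe_zsmul,
      he1v, he3v, hx] at hc
    rw [hc]
    rw [hy1, hy3]
    simp [Prod.ext_iff, smul_eq_mul]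
  obtain ⟨y, z, hA, hB⟩ := hsq ⟨(0, 0, 1), rfl⟩
  obtain ⟨y', z', hA', hB'⟩ := hsq ⟨(1, 0, 0), rfl⟩
  simp only at hA hB hA' hB'
  rw [hz1, mul_zero, zero_add] at hB hB'
  have hq : q = 1 ∨ q = -1 := by
    have : IsUnit q := IsUnit.of_mul_eq_one (a := q) z (by rw [mul_comm]; exact hB.symm)
    exact Int.isUnit_iff.mp this
  have hz' : z' = 0 := by rcases hq with h | h <;> subst h <;> omega
  have hs : s = 1 ∨ s = -1 := by
    rw [hz'] at hA'
    simp only [zero_mul, add_zero] at hA'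
    have : IsUnit s := IsUnit.of_mul_eq_one (a := s) y' (by rw [mul_comm]; exact hA'.symm)
    exact Int.isUnit_iff.mp this
  -- φ2 (0,1,8) ∈ g.ker ⊓ A1
  have hvalU : (φ2 ⟨(0, 1, 8), hku⟩ : ℤ × ℤ × ℤ) ∈ g.ker ⊓ A1 := by
    rw [h12 (0, 1, 8) hmu hku]
    exact (φ1 ⟨(0, 1, 8), hmu⟩).2
  have hUe : (⟨(0, 1, 8), hku⟩ : f.ker)
      = ⟨(0, 1, 0), hke1⟩ + (8:ℤ) • ⟨(0, 0, 1), hke3⟩ := by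
    apply Subtype.ext
    rw [AddSubgroup.coe_add, AddSubgroup.coe_zsmul]
    simp [Prod.ext_iff]
  have hUv : (φ2 ⟨(0, 1, 8), hku⟩ : ℤ × ℤ × ℤ) = (s + 8 * p, 0, 8 * q) := by
    rw [hUe, map_add, map_zsmul, AddSubgroup.coe_add, AddSubgroup.coe_zsmul, he1v, he3v,
      hy1, hy3, hz1]
    simp [Prod.ext_iff]
  have hBB1 : (φ2 ⟨(0, 1, 8), hku⟩ : ℤ × ℤ × ℤ) ∈ B1 := A1_le_B1 hvalU.2
  rw [hUv] at hBB1
  have hdvd : (64:ℤ) ∣ 8 * q + 24 * (s + 8 * p) - 8 * 0 := hBB1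
  rcases hs with h | h <;> rcases hq with h' | h' <;> omega
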